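/- Let C be an mD finite-support convolutional code of rate k/n and degree δ, i.e., a free 𝔽_q[z₁,…,z_m]-submodule of 𝔽_q[z₁,…,z_m]^n of rank k admitting a generator matrix of external degree δ. Then the free distance of C satisfies d_free(C) ≤ n · (⌊δ/k⌋ + m)!/(⌊δ/k⌋! · m!) − k(⌊δ/k⌋ + 1) + δ + 1. -/

import Mathlib

/-- The weight of a polynomial vector `w ∈ R^n`, `R = 𝔽_q[z₁,…,z_m]`: the total number
of nonzero field coefficients over all components and all multidegrees. -/
def wtMv {F : Type*} [CommSemiring F] {m n : ℕ}
    (w : Fin n → MvPolynomial (Fin m) F) : ℕ :=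
  ∑ j, (w j).support.card

/-- The row degree of a polynomial row vector: the maximal total degree of its entries. -/
def rowDegMv {F : Type*} [CommSemiring F] {m n : ℕ}
    (v : Fin n → MvPolynomial (Fin m) F) : ℕ :=
  Finset.univ.sup fun j => (v j).totalDegree

/-- Monomials in `m` variables of total degree at most `ℓ`, as a finset. -/
noncomputable def degLE (m ℓ : ℕ) : Finset (Fin m →₀ ℕ) :=
  ((Finset.univ : Finset (Fin m → Fin (ℓ+1))).image
    (fun f => Finsupp.equivFunOnFinite.symm fun i => (f i : ℕ))).filter
    (fun d => (d.sum fun _ e => e) ≤ ℓ)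

lemma mem_degLE {m ℓ : ℕ} {d : Fin m →₀ ℕ} :
    d ∈ degLE m ℓ ↔ (d.sum fun _ e => e) ≤ ℓ := by
  constructor
  · intro h; exact (Finset.mem_filter.mp h).2
  · intro h
    refine Finset.mem_filter.mpr ⟨?_, h⟩
    have hle : ∀ i, d i ≤ ℓ := by
      intro i
      by_cases h0 : d i = 0
      · omega
      · have hi : i ∈ d.support := Finsupp.mem_support_iff.mpr h0
        calc d i ≤ ∑ a ∈ d.support, d a :=
              Finset.single_le_sum (fun a _ => Nat.zero_le _) hi
          _ = d.sum fun _ e => e := rfl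
          _ ≤ ℓ := h
    refine Finset.mem_image.mpr ⟨fun i => ⟨d i, Nat.lt_succ_of_le (hle i)⟩, Finset.mem_univ _, ?_⟩
    apply Finsupp.equivFunOnFinite.symm_apply_eq.mpr
    rfl

/-- Stars and bars: there are at most `(ℓ+m).choose m` monomials of degree at most `ℓ`
in `m` variables. -/
lemma card_degLE (m ℓ : ℕ) :
    (degLE m ℓ).card ≤ (ℓ + m).choose m := by
  classical
  have hmem : ∀ d ∈ degLE m ℓ, (d.sum fun _ e => e) ≤ ℓ := fun d hd => mem_degLE.mp hd
  set f : (Fin m →₀ ℕ) → Multiset (Fin (m+1)) := fun d =>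
    Multiset.replicate (ℓ - d.sum fun _ e => e) 0 +
      ∑ i : Fin m, Multiset.replicate (d i) i.succ with hf
  have hsum : ∀ d : Fin m →₀ ℕ, (d.sum fun _ e => e) = ∑ i, d i := fun d =>
    Finsupp.sum_fintype _ _ (fun _ => rfl)
  have hcount : ∀ d (i : Fin m), Multiset.count i.succ (f d) = d i := by
    intro d i
    rw [hf]
    simp only [Multiset.count_add, Multiset.count_sum', Multiset.count_replicate]
    rw [if_neg (by exact fun h => (Fin.succ_ne_zero i) h.symm)]
    rw [Finset.sum_congr rfl (fun j _ => by
      rw [show (if j.succ = i.succ then d j else 0) = (if j = i then d j else 0) by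
        simp [Fin.succ_inj]])]
    simp
  have hcard : ∀ d ∈ degLE m ℓ, Multiset.card (f d) = ℓ := by
    intro d hd
    rw [hf]
    simp only [Multiset.card_add, Multiset.card_replicate]
    have hcs : ∀ (s : Finset (Fin m)),
        Multiset.card (∑ i ∈ s, Multiset.replicate (d i) i.succ) = ∑ i ∈ s, d i := by
      intro s
      induction s using Finset.induction with
      | empty => simp
      | insert _ _ h ih => simp [Finset.sum_insert h, Multiset.card_add, ih]
    rw [hcs]
    have := hmem d hd
    rw [hsum] at this ⊢
    omega
  have hinj : Set.InjOn f (degLE m ℓ) := by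
    intro d₁ h₁ d₂ h₂ hEq
    ext i
    rw [← hcount d₁ i, ← hcount d₂ i, hEq]
  have hmaps : ∀ d ∈ degLE m ℓ, f d ∈
      (Finset.univ : Finset (Sym (Fin (m+1)) ℓ)).image Sym.toMultiset := by
    intro d hd
    exact Finset.mem_image.mpr ⟨Sym.mk (f d) (hcard d hd), Finset.mem_univ _, rfl⟩
  calc (degLE m ℓ).card ≤ _ := Finset.card_le_card_of_injOn f hmaps hinj
    _ = Fintype.card (Sym (Fin (m+1)) ℓ) := by
        rw [Finset.card_image_of_injective _ Sym.coe_injective, Finset.card_univ]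
    _ = (ℓ + m).choose m := by
        rw [Sym.card_sym_eq_choose]
        rw [Fintype.card_fin]
        rw [show m + 1 + ℓ - 1 = ℓ + m by omega]
        rw [← Nat.choose_symm (Nat.le_add_left m ℓ)]
        congr 1
        omega

/-- mD generalized Singleton bound. Let `C` be an mD finite-support
convolutional code of rate `k/n` and degree `δ`, i.e. a free submodule of
`𝔽_q[z₁,…,z_m]^n` with a generator matrix `G` (rows linearly independent) of external
degree `δ`. Then the free distance of `C` is at most
`n·(⌊δ/k⌋+m)!/(⌊δ/k⌋!·m!) − k(⌊δ/k⌋+1) + δ + 1`; that is, there exists a nonzero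
codeword of weight at most this bound. -/
theorem mD_generalized_Singleton_bound {F : Type*} [Field F] [Fintype F] {m k n δ : ℕ}
    (hm : 1 ≤ m) (hk : 1 ≤ k)
    (G : Matrix (Fin k) (Fin n) (MvPolynomial (Fin m) F))
    (hG : LinearIndependent (MvPolynomial (Fin m) F) (fun i => G i))
    (hδ : ∑ i, rowDegMv (fun j => G i j) = δ) :
    ∃ u : Fin k → MvPolynomial (Fin m) F, u ≠ 0 ∧
      wtMv (fun j => ∑ i, u i * G i j) ≤
        n * ((δ / k + m).factorial / ((δ / k).factorial * m.factorial))
          - k * (δ / k + 1) + δ + 1 := by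
  classical
  set ℓ := δ / k with hℓ
  set ν : Fin k → ℕ := fun i => rowDegMv (fun j => G i j) with hνdef
  set B := degLE m ℓ with hBdef
  set E : Finset ((_ : Fin k) × (Fin m →₀ ℕ)) :=
    Finset.univ.sigma (fun i => B.filter fun d => ν i + (d.sum fun _ e => e) ≤ ℓ) with hEdef
  have hEmem : ∀ e ∈ E, e.2 ∈ B ∧ ν e.1 + (e.2.sum fun _ x => x) ≤ ℓ := by
    intro e he
    rw [hEdef, Finset.mem_sigma] at he
    exact ⟨(Finset.mem_filter.mp he.2).1, (Finset.mem_filter.mp he.2).2⟩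
  -- lower bound on the cardinality of E
  have hfiber : ∀ i : Fin k,
      ℓ + 1 - ν i ≤ (B.filter fun d => ν i + (d.sum fun _ e => e) ≤ ℓ).card := by
    intro i
    have hmaps : ∀ t ∈ Finset.range (ℓ + 1 - ν i),
        Finsupp.single (⟨0, hm⟩ : Fin m) t ∈
          (B.filter fun d => ν i + (d.sum fun _ e => e) ≤ ℓ) := by
      intro t ht
      rw [Finset.mem_range] at ht
      have hs : ((Finsupp.single (⟨0, hm⟩ : Fin m) t).sum fun _ e => e) = t :=
        Finsupp.sum_single_index rfl
      refine Finset.mem_filter.mpr ⟨?_, ?_⟩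
      · rw [hBdef]; exact mem_degLE.mpr (by rw [hs]; omega)
      · rw [hs]; omega
    have hinj : Set.InjOn (fun t => Finsupp.single (⟨0, hm⟩ : Fin m) t)
        ((Finset.range (ℓ + 1 - ν i) : Finset ℕ) : Set ℕ) := by
      intro a _ b _ hab
      have := congrArg (fun g : Fin m →₀ ℕ => g ⟨0, hm⟩) hab
      simpa [Finsupp.single_eq_same] using this
    have := Finset.card_le_card_of_injOn _ hmaps hinj
    simpa using this
  have hEcard : k * (ℓ + 1) ≤ E.card + δ := by
    have h1 : E.card = ∑ i, (B.filter fun d => ν i + (d.sum fun _ e => e) ≤ ℓ).card := by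
      rw [hEdef, Finset.card_sigma]
    have h2 : ∑ i, ν i = δ := hδ
    calc k * (ℓ + 1) = ∑ _i : Fin k, (ℓ + 1) := by
          rw [Finset.sum_const, Finset.card_univ, Fintype.card_fin, smul_eq_mul]
      _ ≤ ∑ i : Fin k, ((ℓ + 1 - ν i) + ν i) := Finset.sum_le_sum (fun i _ => by omega)
      _ = (∑ i : Fin k, (ℓ + 1 - ν i)) + ∑ i, ν i := Finset.sum_add_distrib
      _ ≤ E.card + δ := by
          rw [h1, h2]
          exact Nat.add_le_add_right (Finset.sum_le_sum (fun i _ => hfiber i)) δ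
  have hδlt : δ < k * (ℓ + 1) := by
    have h1 := Nat.div_add_mod δ k
    have h2 := Nat.mod_lt δ (show 0 < k by omega)
    calc δ < k * (δ / k) + k := by omega
      _ = k * (ℓ + 1) := by rw [hℓ]; ring
  -- the coordinate set and the vanishing set T
  set A := (Finset.univ : Finset (Fin n)) ×ˢ B with hAdef
  have hAcard : A.card = n * B.card := by
    rw [hAdef, Finset.card_product, Finset.card_univ, Fintype.card_fin]
  obtain ⟨T, hTA, hTcard⟩ :=
    Finset.exists_subset_card_eq (s := A) (min_le_right (E.card - 1) A.card)
  -- the message-to-polynomial map U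
  set U : (↥E → F) → Fin k → MvPolynomial (Fin m) F := fun c i =>
    ∑ e : ↥E, if e.1.1 = i then MvPolynomial.monomial e.1.2 (c e) else 0 with hUdef
  have hUco : ∀ (c : ↥E → F) (e : ↥E), MvPolynomial.coeff e.1.2 (U c e.1.1) = c e := by
    intro c e
    simp only [hUdef]
    rw [MvPolynomial.coeff_sum]
    rw [Finset.sum_eq_single e]
    · simp [MvPolynomial.coeff_monomial]
    · intro e' _ hne
      by_cases h1 : e'.1.1 = e.1.1
      · rw [if_pos h1, MvPolynomial.coeff_monomial]
        rw [if_neg]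
        intro h2
        exact hne (Subtype.ext (Sigma.ext h1 (heq_of_eq h2)))
      · rw [if_neg h1, MvPolynomial.coeff_zero]
    · intro h; exact absurd (Finset.mem_univ e) h
  have hUzero : ∀ (c : ↥E → F) (i : Fin k), ℓ < ν i → U c i = 0 := by
    intro c i h
    simp only [hUdef]
    apply Finset.sum_eq_zero
    intro e _
    rw [if_neg]
    intro h1
    have h2 := (hEmem e.1 e.2).2
    rw [h1] at h2
    omega
  have hUdeg : ∀ (c : ↥E → F) (i : Fin k), (U c i).totalDegree ≤ ℓ - ν i := by
    intro c i
    simp only [hUdef]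
    refine le_trans (MvPolynomial.totalDegree_finset_sum _ _) (Finset.sup_le ?_)
    intro e _
    by_cases h1 : e.1.1 = i
    · rw [if_pos h1]
      refine le_trans (MvPolynomial.totalDegree_monomial_le _ _) ?_
      have h2 := (hEmem e.1 e.2).2
      rw [h1] at h2
      have : (e.1.2.sum fun _ => id) = e.1.2.sum fun _ x => x := rfl
      omega
    · rw [if_neg h1]
      simp
  have hWdeg : ∀ (c : ↥E → F) (j : Fin n),
      (∑ i, U c i * G i j).totalDegree ≤ ℓ := by
    intro c j
    refine le_trans (MvPolynomial.totalDegree_finset_sum _ _) (Finset.sup_le ?_)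
    intro i _
    by_cases hi : ν i ≤ ℓ
    · refine le_trans (MvPolynomial.totalDegree_mul _ _) ?_
      have h1 := hUdeg c i
      have h2 : (G i j).totalDegree ≤ ν i := by
        simp only [hνdef, rowDegMv]
        exact Finset.le_sup (f := fun j' => (G i j').totalDegree) (Finset.mem_univ j)
      omega
    · rw [hUzero c i (by omega), zero_mul]
      simp
  have hUsub : ∀ (c₁ c₂ : ↥E → F) (i : Fin k), U (c₁ - c₂) i = U c₁ i - U c₂ i := by
    intro c₁ c₂ i
    simp only [hUdef, Pi.sub_apply, map_sub]
    rw [← Finset.sum_sub_distrib]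
    apply Finset.sum_congr rfl
    intro e _
    split <;> simp
  -- non-injectivity of the evaluation-on-T map
  set Ψ : (↥E → F) → (↥T → F) := fun c t =>
    MvPolynomial.coeff t.1.2 (∑ i, U c i * G i t.1.1) with hΨdef
  have hninj : ¬ Function.Injective Ψ := by
    intro hinj
    have h1 := Fintype.card_le_of_injective Ψ hinj
    rw [Fintype.card_fun, Fintype.card_fun, Fintype.card_coe, Fintype.card_coe] at h1
    have h2 : E.card ≤ T.card := (Nat.pow_le_pow_iff_right Fintype.one_lt_card).mp h1
    omega
  obtain ⟨c₁, c₂, hΨeq, hcne⟩ := Function.not_injective_iff.mp hninj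
  set w : Fin n → MvPolynomial (Fin m) F :=
    fun j => ∑ i, (U c₁ i - U c₂ i) * G i j with hwdef
  have hwW : ∀ j, w j = ∑ i, U (c₁ - c₂) i * G i j := by
    intro j
    rw [hwdef]
    exact (Finset.sum_congr rfl (fun i _ => by rw [hUsub])).symm
  have hwsub : ∀ j, w j = (∑ i, U c₁ i * G i j) - (∑ i, U c₂ i * G i j) := by
    intro j
    rw [hwdef, ← Finset.sum_sub_distrib]
    exact Finset.sum_congr rfl (fun i _ => by rw [sub_mul])
  have hTvanish : ∀ p ∈ T, MvPolynomial.coeff p.2 (w p.1) = 0 := by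
    intro p hp
    have h1 := congrFun hΨeq (⟨p, hp⟩ : ↥T)
    simp only [hΨdef] at h1
    rw [hwsub, MvPolynomial.coeff_sub, h1, sub_self]
  have hsupp : ∀ j, (w j).support ⊆ B.filter (fun d => ((j, d) : Fin n × (Fin m →₀ ℕ)) ∉ T) := by
    intro j d hd
    refine Finset.mem_filter.mpr ⟨?_, ?_⟩
    · rw [hBdef]
      refine mem_degLE.mpr ?_
      calc (d.sum fun _ e => e) ≤ (w j).totalDegree := MvPolynomial.le_totalDegree hd
        _ ≤ ℓ := by rw [hwW j]; exact hWdeg (c₁ - c₂) j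
    · intro hT
      exact (MvPolynomial.mem_support_iff.mp hd) (hTvanish (j, d) hT)
  -- weight computation
  have hwt : wtMv w ≤ ∑ j : Fin n,
      (B.filter (fun d => ((j, d) : Fin n × (Fin m →₀ ℕ)) ∉ T)).card :=
    Finset.sum_le_sum (fun j _ => Finset.card_le_card (hsupp j))
  have hfib : ∑ j : Fin n,
      (B.filter (fun d => ((j, d) : Fin n × (Fin m →₀ ℕ)) ∈ T)).card = T.card := by
    rw [Finset.card_eq_sum_card_fiberwise
      (f := Prod.fst) (t := Finset.univ) (fun p _ => Finset.mem_univ _)]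
    refine Finset.sum_congr rfl ?_
    intro j _
    refine Finset.card_bij (fun (d : Fin m →₀ ℕ) _ => ((j, d) : Fin n × (Fin m →₀ ℕ)))
      ?_ ?_ ?_
    · intro d hd
      exact Finset.mem_filter.mpr ⟨(Finset.mem_filter.mp hd).2, rfl⟩
    · intro d₁ _ d₂ _ h
      exact (Prod.mk.injEq _ _ _ _).mp h |>.2
    · intro p hp
      rw [Finset.mem_filter] at hp
      have hpe : ((j, p.2) : Fin n × (Fin m →₀ ℕ)) = p := by
        rw [← hp.2]
      refine ⟨p.2, ?_, hpe⟩
      refine Finset.mem_filter.mpr ⟨?_, ?_⟩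
      · have h3 := hTA hp.1
        rw [hAdef, Finset.mem_product] at h3
        exact h3.2
      · rw [hpe]; exact hp.1
  have hsum2 : (∑ j : Fin n,
      (B.filter (fun d => ((j, d) : Fin n × (Fin m →₀ ℕ)) ∉ T)).card) + T.card
      = n * B.card := by
    rw [← hfib, ← Finset.sum_add_distrib]
    have h4 : ∀ j : Fin n,
        (B.filter (fun d => ((j, d) : Fin n × (Fin m →₀ ℕ)) ∉ T)).card +
        (B.filter (fun d => ((j, d) : Fin n × (Fin m →₀ ℕ)) ∈ T)).card = B.card := by
      intro j
      rw [Finset.filter_not, Finset.card_sdiff_of_subset (Finset.filter_subset _ _)]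
      have := Finset.card_le_card
        (Finset.filter_subset (fun d => ((j, d) : Fin n × (Fin m →₀ ℕ)) ∈ T) B)
      omega
    rw [Finset.sum_congr rfl (fun j _ => h4 j), Finset.sum_const, Finset.card_univ,
      Fintype.card_fin, smul_eq_mul]
  have hN : n * B.card ≤ n * ((ℓ + m).choose m) :=
    Nat.mul_le_mul_left n (by rw [hBdef] at *; exact card_degLE m ℓ)
  have hC : (ℓ + m).choose m = (ℓ + m).factorial / (ℓ.factorial * m.factorial) := by
    rw [Nat.choose_eq_factorial_div_factorial (Nat.le_add_left m ℓ)]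
    rw [Nat.add_sub_cancel, Nat.mul_comm]
  refine ⟨fun i => U c₁ i - U c₂ i, ?_, ?_⟩
  · intro h0
    obtain ⟨e, he⟩ := Function.ne_iff.mp hcne
    apply he
    have h1 : U c₁ e.1.1 - U c₂ e.1.1 = 0 := by
      have := congrFun h0 e.1.1
      simpa using this
    have h2 := congrArg (MvPolynomial.coeff e.1.2) h1
    rw [MvPolynomial.coeff_sub, MvPolynomial.coeff_zero, hUco c₁ e, hUco c₂ e] at h2
    exact sub_eq_zero.mp h2
  · show wtMv w ≤ n * ((ℓ + m).factorial / (ℓ.factorial * m.factorial)) - k * (ℓ + 1) + δ + 1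
    rw [← hC]
    omega
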